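/- For $c_0 > -1$, $\mu > 0$, $\nu = \pi/(2\mu)$, $j \in \mathbb{Z}$ and $\ell \in \mathbb{N}$, set $H_{\ell,j}(z_1,z_2) = F_{c_0 + \nu\ell + i(j+1)/2,\, j}(z_1,z_2)$ on the truncated worm $\mathcal{W}'_\mu$. Then each of the two families $\{H_{2k,j} : j \in \mathbb{Z}, k \in \mathbb{N}\}$ and $\{H_{2k+1,j} : j \in \mathbb{Z}, k \in \mathbb{N}\}$ is an orthogonal system in $A^2(\mathcal{W}'_\mu)$. -/

import Mathlib

open MeasureTheory Complex Real

/-- The truncated worm domain `𝒲'_μ`. -/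
def truncatedWorm (μ : ℝ) : Set (ℂ × ℂ) :=
  {z : ℂ × ℂ | z.2 ≠ 0 ∧
    ‖z.1 - Complex.exp (Complex.I * (Real.log (‖z.2‖ ^ 2) : ℂ))‖ ^ 2 < 1 ∧
    |Real.log (‖z.2‖ ^ 2)| < μ}

/-- The functions `F_{α,j}(z₁,z₂) = (z₁ e^{-i log|z₂|²})^α e^{iα log|z₂|²} z₂^j`. -/
noncomputable def Fworm (α : ℂ) (j : ℤ) (z : ℂ × ℂ) : ℂ :=
  (z.1 * Complex.exp (-Complex.I * (Real.log (‖z.2‖ ^ 2) : ℂ))) ^ α *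
    Complex.exp (Complex.I * α * (Real.log (‖z.2‖ ^ 2) : ℂ)) * z.2 ^ j

/-- `H_{ℓ,j} = F_{c₀ + νℓ + i(j+1)/2, j}` with `ν = π/(2μ)`. -/
noncomputable def Hworm (c₀ μ : ℝ) (ℓ : ℕ) (j : ℤ) : ℂ × ℂ → ℂ :=
  Fworm (((c₀ + (π / (2 * μ)) * ℓ : ℝ) : ℂ) + Complex.I * ((j : ℂ) + 1) / 2) j

-- det of multiplication by a on ℂ as ℝ-linear map
lemma detC (a : ℂ) : LinearMap.det ((LinearMap.mul ℝ ℂ) a) = Complex.normSq a := by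
  rw [← LinearMap.det_toMatrix Complex.basisOneI]
  have : LinearMap.toMatrix Complex.basisOneI Complex.basisOneI ((LinearMap.mul ℝ ℂ) a)
      = !![a.re, -a.im; a.im, a.re] := by
    ext i j
    rw [LinearMap.toMatrix_apply]
    fin_cases i <;> fin_cases j <;>
      simp [Complex.basisOneI, Matrix.cons_val_zero, Matrix.cons_val_one]
  rw [this, Matrix.det_fin_two_of, Complex.normSq_apply]
  ring

lemma detProd (f g : ℂ →ₗ[ℝ] ℂ) : LinearMap.det (f.prodMap g) = LinearMap.det f * LinearMap.det g := by
  classical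
  rw [← LinearMap.det_toMatrix (Complex.basisOneI.prod Complex.basisOneI),
    LinearMap.toMatrix_prodMap, Matrix.det_fromBlocks_zero₁₂,
    LinearMap.det_toMatrix, LinearMap.det_toMatrix]

lemma integral_image_scale (a b : ℂ) (ha : a ≠ 0) (hb : b ≠ 0) (A : Set (ℂ × ℂ))
    (hA : MeasurableSet A) (g : ℂ × ℂ → ℂ) :
    ∫ z in (fun z : ℂ × ℂ => (a * z.1, b * z.2)) '' A, g z
      = ∫ z in A, (Complex.normSq a * Complex.normSq b : ℝ) • g (a * z.1, b * z.2) := by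
  set L : (ℂ × ℂ) →L[ℝ] ℂ × ℂ :=
    (((ContinuousLinearMap.mul ℝ ℂ) a).prodMap ((ContinuousLinearMap.mul ℝ ℂ) b)) with hLdef
  have hco : (fun z : ℂ × ℂ => (a * z.1, b * z.2)) = ⇑L := rfl
  have hL : ∀ x ∈ A, HasFDerivWithinAt (fun z : ℂ × ℂ => (a * z.1, b * z.2)) L A x := by
    intro x hx
    rw [hco]
    exact L.hasFDerivAt.hasFDerivWithinAt
  have hinj : Set.InjOn (fun z : ℂ × ℂ => (a * z.1, b * z.2)) A := by
    intro x _ y _ h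
    simp only [Prod.mk.injEq] at h
    exact Prod.ext (mul_left_cancel₀ ha h.1) (mul_left_cancel₀ hb h.2)
  have hdet : (L : (ℂ × ℂ) →ₗ[ℝ] ℂ × ℂ).det = Complex.normSq a * Complex.normSq b := by
    have : (L : (ℂ × ℂ) →ₗ[ℝ] ℂ × ℂ)
        = ((LinearMap.mul ℝ ℂ) a).prodMap ((LinearMap.mul ℝ ℂ) b) := by
      ext z <;> rfl
    rw [this, detProd, detC, detC]
  haveI : (volume : Measure (ℂ × ℂ)).IsAddHaarMeasure := by
    rw [MeasureTheory.Measure.volume_eq_prod ℂ ℂ]; infer_instance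
  rw [integral_image_eq_integral_abs_det_fderiv_smul volume hA hL hinj g]
  refine setIntegral_congr_fun hA (fun x _ => ?_)
  rw [ContinuousLinearMap.det, hdet, _root_.abs_of_nonneg (mul_nonneg (Complex.normSq_nonneg a) (Complex.normSq_nonneg b))]

lemma Fworm_rot (α : ℂ) (j : ℤ) (c : ℂ) (hc : ‖c‖ = 1) (z : ℂ × ℂ) :
    Fworm α j (z.1, c * z.2) = c ^ j * Fworm α j z := by
  unfold Fworm
  simp only [map_mul, norm_mul, hc, one_mul, mul_zpow]
  ring

lemma logabs_scale (σ : ℝ) (w : ℂ) (hw : w ≠ 0) :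
    Real.log (‖(Real.exp (σ/2) : ℂ) * w‖ ^ 2)
      = σ + Real.log (‖w‖ ^ 2) := by
  rw [norm_mul, Complex.norm_real, Real.norm_eq_abs, abs_of_pos (Real.exp_pos _), mul_pow,
    ← Real.exp_nat_mul,
    Real.log_mul (Real.exp_ne_zero _) (by
      simpa using pow_ne_zero 2 (norm_ne_zero_iff.2 hw)),
    Real.log_exp]
  ring_nf

lemma Fworm_scale (α : ℂ) (j : ℤ) (σ : ℝ) (z : ℂ × ℂ) (hz : z.2 ≠ 0) :
    Fworm α j (Complex.exp (Complex.I * σ) * z.1, (Real.exp (σ/2) : ℂ) * z.2)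
      = Complex.exp (Complex.I * α * σ) * (Real.exp (σ/2) : ℂ) ^ j * Fworm α j z := by
  unfold Fworm
  simp only [logabs_scale σ z.2 hz]
  have h1 : Complex.exp (Complex.I * σ) * z.1
        * Complex.exp (-Complex.I * ((σ + Real.log (‖z.2‖ ^ 2) : ℝ) : ℂ))
      = z.1 * Complex.exp (-Complex.I * (Real.log (‖z.2‖ ^ 2) : ℂ)) := by
    rw [mul_comm (Complex.exp (Complex.I * σ)) z.1, mul_assoc, ← Complex.exp_add]
    push_cast
    ring_nf
  have h2 : Complex.exp (Complex.I * α * ((σ + Real.log (‖z.2‖ ^ 2) : ℝ) : ℂ))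
      = Complex.exp (Complex.I * α * σ)
        * Complex.exp (Complex.I * α * (Real.log (‖z.2‖ ^ 2) : ℂ)) := by
    rw [← Complex.exp_add]
    push_cast
    ring_nf
  rw [h1, h2, mul_zpow]
  ring

noncomputable def tW (z : ℂ × ℂ) : ℝ := Real.log (‖z.2‖ ^ 2)

lemma measurable_tW : Measurable tW :=
  Real.measurable_log.comp ((continuous_norm.measurable.comp measurable_snd).pow_const 2)

lemma isOpen_truncatedWorm (μ : ℝ) : IsOpen (truncatedWorm μ) := by
  have hU : IsOpen {z : ℂ × ℂ | z.2 ≠ 0} :=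
    isOpen_ne.preimage continuous_snd
  have hcont : ContinuousOn (fun z : ℂ × ℂ =>
      (‖z.1 - Complex.exp (Complex.I * (Real.log (‖z.2‖ ^ 2) : ℂ))‖ ^ 2,
        |Real.log (‖z.2‖ ^ 2)|)) {z : ℂ × ℂ | z.2 ≠ 0} := by
    have hlog : ContinuousOn (fun z : ℂ × ℂ => Real.log (‖z.2‖ ^ 2))
        {z : ℂ × ℂ | z.2 ≠ 0} := by
      apply ContinuousOn.log
      · exact ((continuous_norm.comp continuous_snd).pow 2).continuousOn
      · intro z hz
        simpa using pow_ne_zero 2 (norm_ne_zero_iff.2 hz)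
    apply ContinuousOn.prodMk
    · apply ContinuousOn.pow
      apply continuous_norm.comp_continuousOn
      apply ContinuousOn.sub continuous_fst.continuousOn
      apply Complex.continuous_exp.comp_continuousOn
      exact (continuous_const.continuousOn).mul (Complex.continuous_ofReal.comp_continuousOn hlog)
    · exact hlog.abs
  have : truncatedWorm μ = {z : ℂ × ℂ | z.2 ≠ 0} ∩ (fun z : ℂ × ℂ =>
      (‖z.1 - Complex.exp (Complex.I * (Real.log (‖z.2‖ ^ 2) : ℂ))‖ ^ 2,
        |Real.log (‖z.2‖ ^ 2)|)) ⁻¹' (Set.Iio 1 ×ˢ Set.Iio μ) := by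
    ext z
    simp [truncatedWorm, and_assoc]
  rw [this]
  exact hcont.isOpen_inter_preimage hU ((isOpen_Iio).prod (isOpen_Iio))

lemma mem_truncatedWorm_scale (μ σ : ℝ) (z : ℂ × ℂ) :
    (Complex.exp (Complex.I * σ) * z.1, (Real.exp (σ/2) : ℂ) * z.2) ∈ truncatedWorm μ
      ↔ (z.2 ≠ 0 ∧
          ‖z.1 - Complex.exp (Complex.I * (tW z : ℂ))‖ ^ 2 < 1 ∧
          |tW z + σ| < μ) := by
  by_cases hz : z.2 = 0
  · simp [truncatedWorm, hz, Real.exp_ne_zero]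
  · have h2 : (Real.exp (σ/2) : ℂ) * z.2 ≠ 0 :=
      mul_ne_zero (by simpa using Real.exp_ne_zero _) hz
    have hlog := logabs_scale σ z.2 hz
    simp only [truncatedWorm, Set.mem_setOf_eq, hlog, h2, hz, true_iff, Ne, not_false_iff,
      true_and, tW]
    constructor
    · rintro ⟨h1, h3⟩
      refine ⟨?_, by rwa [add_comm] at h3⟩
      have : Complex.exp (Complex.I * σ) * z.1
          - Complex.exp (Complex.I * ((σ + Real.log (‖z.2‖ ^ 2) : ℝ) : ℂ))
          = Complex.exp (Complex.I * σ) *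
            (z.1 - Complex.exp (Complex.I * (Real.log (‖z.2‖ ^ 2) : ℂ))) := by
        rw [mul_sub, ← Complex.exp_add]
        push_cast
        ring_nf
      rw [this, norm_mul, Complex.norm_exp] at h1
      simpa using h1
    · rintro ⟨h1, h3⟩
      refine ⟨?_, by rwa [add_comm]⟩
      have : Complex.exp (Complex.I * σ) * z.1
          - Complex.exp (Complex.I * ((σ + Real.log (‖z.2‖ ^ 2) : ℝ) : ℂ))
          = Complex.exp (Complex.I * σ) *
            (z.1 - Complex.exp (Complex.I * (Real.log (‖z.2‖ ^ 2) : ℂ))) := by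
        rw [mul_sub, ← Complex.exp_add]
        push_cast
        ring_nf
      rw [this, norm_mul, Complex.norm_exp]
      simpa using h1

lemma orth_of_ne_j (μ : ℝ) (α β : ℂ) (j j' : ℤ) (hjj : j ≠ j') :
    ∫ z in truncatedWorm μ, Fworm α j z * (starRingEnd ℂ) (Fworm β j' z) = 0 := by
  set n : ℤ := j - j' with hn
  have hn0 : (n : ℝ) ≠ 0 := by exact_mod_cast sub_ne_zero.2 hjj
  set c : ℂ := Complex.exp (Complex.I * (π / (n : ℝ) : ℝ)) with hc
  have habs : ‖c‖ = 1 := by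
    rw [hc, Complex.norm_exp]
    simp
  have hc0 : c ≠ 0 := Complex.exp_ne_zero _
  -- the rotation map
  have habs2 : ∀ w : ℂ, ‖c * w‖ = ‖w‖ := fun w => by
    rw [norm_mul, habs, one_mul]
  have himg : (fun z : ℂ × ℂ => ((1 : ℂ) * z.1, c * z.2)) '' truncatedWorm μ
      = truncatedWorm μ := by
    apply Set.eq_of_subset_of_subset
    · rintro w ⟨z, hz, rfl⟩
      obtain ⟨h1, h2, h3⟩ := hz
      simp only [one_mul]
      exact ⟨mul_ne_zero hc0 h1, by rwa [habs2 z.2], by rwa [habs2 z.2]⟩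
    · intro w hw
      obtain ⟨h1, h2, h3⟩ := hw
      refine ⟨(w.1, c⁻¹ * w.2), ?_, ?_⟩
      · have habs3 : ‖c⁻¹ * w.2‖ = ‖w.2‖ := by
          rw [norm_mul, norm_inv, habs]; simp
        exact ⟨mul_ne_zero (inv_ne_zero hc0) h1, by rwa [habs3], by rwa [habs3]⟩
      · simp only [one_mul, ← mul_assoc, mul_inv_cancel₀ hc0]
  have key : ∫ z in truncatedWorm μ, Fworm α j z * (starRingEnd ℂ) (Fworm β j' z)
      = c ^ n * ∫ z in truncatedWorm μ, Fworm α j z * (starRingEnd ℂ) (Fworm β j' z) := by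
    conv_lhs => rw [← himg]
    rw [integral_image_scale 1 c one_ne_zero hc0 _ (isOpen_truncatedWorm μ).measurableSet]
    rw [← integral_const_mul]
    refine setIntegral_congr_fun (isOpen_truncatedWorm μ).measurableSet (fun z hz => ?_)
    have h1 : Fworm α j (1 * z.1, c * z.2) = c ^ j * Fworm α j z := by
      rw [one_mul]; exact Fworm_rot α j c habs z
    have h2 : Fworm β j' (1 * z.1, c * z.2) = c ^ j' * Fworm β j' z := by
      rw [one_mul]; exact Fworm_rot β j' c habs z
    simp only [h1, h2, map_mul, map_zpow₀]
    have hconj : (starRingEnd ℂ) c = c⁻¹ := (Complex.inv_eq_conj habs).symm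
    have hns : Complex.normSq c = 1 := by
      rw [Complex.normSq_eq_norm_sq, habs, one_pow]
    rw [hconj, inv_zpow, ← zpow_neg, hns, Complex.normSq_one, one_mul, one_smul, hn,
      sub_eq_add_neg, zpow_add₀ hc0]
    ring
  have hcn : c ^ n = -1 := by
    rw [hc, ← Complex.exp_int_mul]
    have : (n : ℂ) * (Complex.I * ((π / (n : ℝ) : ℝ) : ℂ)) = π * Complex.I := by
      have hnn : (n : ℂ) ≠ 0 := by exact_mod_cast hn0
      push_cast
      field_simp
    rw [this, Complex.exp_pi_mul_I]
  rw [hcn] at key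
  have := key
  -- x = -x → x = 0
  set x := ∫ z in truncatedWorm μ, Fworm α j z * (starRingEnd ℂ) (Fworm β j' z)
  have h2 : (2 : ℂ) * x = 0 := by linear_combination key
  simpa using h2

lemma key_pointwise (c c' σ : ℝ) (j : ℤ) (z : ℂ × ℂ) (hz : z.2 ≠ 0) :
    ((Complex.normSq (Complex.exp (Complex.I * σ)) *
        Complex.normSq ((Real.exp (σ/2) : ℝ) : ℂ) : ℝ)) •
      (Fworm ((c : ℂ) + Complex.I * ((j : ℂ) + 1) / 2) j
          (Complex.exp (Complex.I * σ) * z.1, ((Real.exp (σ/2) : ℝ) : ℂ) * z.2)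
        * (starRingEnd ℂ) (Fworm ((c' : ℂ) + Complex.I * ((j : ℂ) + 1) / 2) j
          (Complex.exp (Complex.I * σ) * z.1, ((Real.exp (σ/2) : ℝ) : ℂ) * z.2)))
    = Complex.exp (Complex.I * ((c : ℂ) - (c' : ℂ)) * σ) *
      (Fworm ((c : ℂ) + Complex.I * ((j : ℂ) + 1) / 2) j z
        * (starRingEnd ℂ) (Fworm ((c' : ℂ) + Complex.I * ((j : ℂ) + 1) / 2) j z)) := by
  set α : ℂ := (c : ℂ) + Complex.I * ((j : ℂ) + 1) / 2 with hα
  set β : ℂ := (c' : ℂ) + Complex.I * ((j : ℂ) + 1) / 2 with hβ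
  rw [Fworm_scale α j σ z hz, Fworm_scale β j σ z hz]
  have h1 : Complex.normSq (Complex.exp (Complex.I * σ)) = 1 := by
    rw [Complex.normSq_eq_norm_sq, Complex.norm_exp]
    simp
  have h2 : Complex.normSq ((Real.exp (σ/2) : ℝ) : ℂ) = Real.exp σ := by
    rw [Complex.normSq_ofReal, ← Real.exp_add]
    norm_num
  rw [h1, h2, one_mul]
  have hb : ((Real.exp (σ/2) : ℝ) : ℂ) = Complex.exp ((σ/2 : ℝ) : ℂ) := by
    rw [Complex.ofReal_exp]
  rw [hb]
  rw [map_mul, map_mul, ← Complex.exp_conj, map_zpow₀, ← Complex.exp_conj]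
  have hc1 : (starRingEnd ℂ) (Complex.I * β * σ) = -Complex.I * ((c' : ℂ) - Complex.I * ((j : ℂ) + 1) / 2) * σ := by
    rw [hβ]
    simp only [map_mul, map_add, map_div₀, Complex.conj_I, Complex.conj_ofReal, map_one,
      map_intCast, map_ofNat]
    ring
  have hc2 : (starRingEnd ℂ) ((σ/2 : ℝ) : ℂ) = ((σ/2 : ℝ) : ℂ) := Complex.conj_ofReal _
  rw [hc1, hc2]
  rw [Complex.real_smul, Complex.ofReal_exp]
  rw [← Complex.exp_int_mul]
  have key : Complex.exp ((σ : ℂ)) * Complex.exp (Complex.I * α * σ)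
      * Complex.exp ((j : ℂ) * ((σ/2 : ℝ) : ℂ))
      * Complex.exp (-Complex.I * ((c' : ℂ) - Complex.I * ((j : ℂ) + 1) / 2) * σ)
      * Complex.exp ((j : ℂ) * ((σ/2 : ℝ) : ℂ))
      = Complex.exp (Complex.I * ((c : ℂ) - (c' : ℂ)) * σ) := by
    rw [← Complex.exp_add, ← Complex.exp_add, ← Complex.exp_add, ← Complex.exp_add]
    congr 1
    rw [hα]
    push_cast
    linear_combination ((σ : ℂ) + (σ : ℂ) * (j : ℂ)) * Complex.I_sq
  rw [← key]
  ring

lemma tW_scale (σ : ℝ) (z : ℂ × ℂ) (hz : z.2 ≠ 0) :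
    tW (Complex.exp (Complex.I * σ) * z.1, (Real.exp (σ/2) : ℂ) * z.2) = σ + tW z :=
  logabs_scale σ z.2 hz

lemma scale_comp (σ : ℝ) (w : ℂ × ℂ) :
    (Complex.exp (Complex.I * σ) * (Complex.exp (Complex.I * (-σ : ℝ)) * w.1),
      (Real.exp (σ/2) : ℂ) * ((Real.exp ((-σ)/2) : ℂ) * w.2)) = w := by
  have h1 : Complex.exp (Complex.I * σ) * Complex.exp (Complex.I * (-σ : ℝ)) = 1 := by
    rw [← Complex.exp_add]
    push_cast
    ring_nf
    exact Complex.exp_zero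
  have h2 : ((Real.exp (σ/2) : ℝ) : ℂ) * ((Real.exp ((-σ)/2) : ℝ) : ℂ) = 1 := by
    rw [← Complex.ofReal_mul, ← Real.exp_add]
    norm_num
    ring_nf
    exact Complex.exp_zero
  rw [← mul_assoc, ← mul_assoc, h1, h2, one_mul, one_mul]

lemma sphere_slice_null (r : ℝ) : volume {z : ℂ × ℂ | ‖z.2‖ = r} = 0 := by
  have : {z : ℂ × ℂ | ‖z.2‖ = r} = Set.univ ×ˢ Metric.sphere (0 : ℂ) r := by
    ext z
    simp [mem_sphere_zero_iff_norm]
  rw [this, MeasureTheory.Measure.volume_eq_prod, Measure.prod_prod,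
    Measure.addHaar_sphere, mul_zero]

lemma orth_of_ne_k (μ : ℝ) (hμ : 0 < μ) (c c' : ℝ) (j : ℤ) (m : ℕ) (hm : 0 < m)
    (hcc : c - c' = (π / μ) * m) :
    ∫ z in truncatedWorm μ,
      Fworm ((c : ℂ) + Complex.I * ((j : ℂ) + 1) / 2) j z *
        (starRingEnd ℂ) (Fworm ((c' : ℂ) + Complex.I * ((j : ℂ) + 1) / 2) j z) = 0 := by
  set f : ℂ × ℂ → ℂ := fun z =>
    Fworm ((c : ℂ) + Complex.I * ((j : ℂ) + 1) / 2) j z *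
      (starRingEnd ℂ) (Fworm ((c' : ℂ) + Complex.I * ((j : ℂ) + 1) / 2) j z) with hf
  set S := truncatedWorm μ with hSdef
  have hS : MeasurableSet S := (isOpen_truncatedWorm μ).measurableSet
  by_cases hint : IntegrableOn f S volume
  swap
  · exact integral_undef hint
  set s : ℝ := μ / m with hs
  have hm' : (0 : ℝ) < m := Nat.cast_pos.2 hm
  have hs0 : 0 < s := div_pos hμ hm'
  have hsμ : s ≤ μ := by
    rw [hs, div_le_iff₀ hm']
    nlinarith [(Nat.one_le_cast.2 hm : (1:ℝ) ≤ m), hμ.le]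
  -- the four pieces
  set A : Set (ℂ × ℂ) := S ∩ {z | tW z < μ - s} with hA
  set B : Set (ℂ × ℂ) := S ∩ {z | μ - s < tW z} with hB
  set A' : Set (ℂ × ℂ) := S ∩ {z | s - μ < tW z} with hA'
  set B' : Set (ℂ × ℂ) := S ∩ {z | tW z < s - μ} with hB'
  have hmA : MeasurableSet A := hS.inter (measurable_tW measurableSet_Iio)
  have hmB : MeasurableSet B := hS.inter (measurable_tW measurableSet_Ioi)
  have hmA' : MeasurableSet A' := hS.inter (measurable_tW measurableSet_Ioi)
  have hmB' : MeasurableSet B' := hS.inter (measurable_tW measurableSet_Iio)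
  -- membership in S in terms of tW
  have hmemS : ∀ z : ℂ × ℂ, z ∈ S ↔ (z.2 ≠ 0 ∧
      ‖z.1 - Complex.exp (Complex.I * (tW z : ℂ))‖ ^ 2 < 1 ∧ |tW z| < μ) := by
    intro z
    rfl
  -- image identities
  have himg1 : (fun z : ℂ × ℂ => (Complex.exp (Complex.I * (s : ℝ)) * z.1,
      ((Real.exp (s/2) : ℝ) : ℂ) * z.2)) '' A = A' := by
    apply Set.eq_of_subset_of_subset
    · rintro w ⟨z, ⟨hzS, hzt⟩, rfl⟩
      obtain ⟨h1, h2, h3⟩ := (hmemS z).1 hzS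
      have ht : tW (Complex.exp (Complex.I * (s : ℝ)) * z.1,
          ((Real.exp (s/2) : ℝ) : ℂ) * z.2) = s + tW z := tW_scale s z h1
      have hzt' : tW z < μ - s := hzt
      rw [abs_lt] at h3
      constructor
      · rw [mem_truncatedWorm_scale]
        exact ⟨h1, h2, by rw [abs_lt]; constructor <;> linarith⟩
      · simp only [Set.mem_setOf_eq, ht]
        linarith
    · rintro w ⟨hwS, hwt⟩
      obtain ⟨h1, h2, h3⟩ := (hmemS w).1 hwS
      have hwt' : s - μ < tW w := hwt
      rw [abs_lt] at h3
      refine ⟨(Complex.exp (Complex.I * ((-s : ℝ) : ℝ)) * w.1,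
        ((Real.exp ((-s)/2) : ℝ) : ℂ) * w.2), ⟨?_, ?_⟩, ?_⟩
      · rw [mem_truncatedWorm_scale]
        refine ⟨h1, h2, ?_⟩
        rw [abs_lt]
        constructor <;> linarith
      · simp only [Set.mem_setOf_eq, tW_scale (-s) w h1]
        linarith
      · exact scale_comp s w
  have himg2 : (fun z : ℂ × ℂ => (Complex.exp (Complex.I * ((s - 2*μ : ℝ) : ℝ)) * z.1,
      ((Real.exp ((s - 2*μ)/2) : ℝ) : ℂ) * z.2)) '' B = B' := by
    apply Set.eq_of_subset_of_subset
    · rintro w ⟨z, ⟨hzS, hzt⟩, rfl⟩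
      obtain ⟨h1, h2, h3⟩ := (hmemS z).1 hzS
      have ht : tW (Complex.exp (Complex.I * ((s - 2*μ : ℝ) : ℝ)) * z.1,
          ((Real.exp ((s - 2*μ)/2) : ℝ) : ℂ) * z.2) = (s - 2*μ) + tW z :=
        tW_scale (s - 2*μ) z h1
      have hzt' : μ - s < tW z := hzt
      rw [abs_lt] at h3
      constructor
      · rw [mem_truncatedWorm_scale]
        exact ⟨h1, h2, by rw [abs_lt]; constructor <;> linarith⟩
      · simp only [Set.mem_setOf_eq, ht]
        linarith
    · rintro w ⟨hwS, hwt⟩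
      obtain ⟨h1, h2, h3⟩ := (hmemS w).1 hwS
      have hwt' : tW w < s - μ := hwt
      rw [abs_lt] at h3
      have hneg : -(s - 2*μ) = 2*μ - s := by ring
      refine ⟨(Complex.exp (Complex.I * ((-(s - 2*μ) : ℝ) : ℝ)) * w.1,
        ((Real.exp ((-(s - 2*μ))/2) : ℝ) : ℂ) * w.2), ⟨?_, ?_⟩, ?_⟩
      · rw [mem_truncatedWorm_scale]
        refine ⟨h1, h2, ?_⟩
        rw [hneg, abs_lt]
        constructor <;> linarith
      · simp only [Set.mem_setOf_eq, hneg, tW_scale (2*μ - s) w h1]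
        linarith
      · exact scale_comp (s - 2*μ) w
  -- slices are null
  have hsliceval : ∀ (r : ℝ) (z : ℂ × ℂ), z ∈ S → tW z = r →
      ‖z.2‖ = Real.exp (r/2) := by
    intro r z hzS htz
    obtain ⟨h1, _, _⟩ := (hmemS z).1 hzS
    have h0 : (0 : ℝ) < ‖z.2‖ := norm_pos_iff.mpr h1
    have hsq : ‖z.2‖ ^ 2 = Real.exp r := by
      rw [← Real.exp_log (pow_pos h0 2)]
      exact congrArg Real.exp htz
    have hsq2 : Real.exp (r/2) ^ 2 = Real.exp r := by
      rw [sq, ← Real.exp_add]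
      ring_nf
    nlinarith [Real.exp_pos (r/2), sq_nonneg (‖z.2‖ - Real.exp (r/2)),
      sq_nonneg (‖z.2‖ + Real.exp (r/2))]
  have haeAB : (A ∪ B : Set (ℂ × ℂ)) =ᵐ[volume] S := by
    rw [MeasureTheory.ae_eq_set]
    constructor
    · have : (A ∪ B) \ S = ∅ := by
        rw [Set.diff_eq_empty]
        exact Set.union_subset Set.inter_subset_left Set.inter_subset_left
      rw [this]
      exact measure_empty
    · apply measure_mono_null _ (sphere_slice_null (Real.exp ((μ - s)/2)))
      rintro z ⟨hzS, hznot⟩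
      have h1 : ¬ (tW z < μ - s) := fun h => hznot (Or.inl ⟨hzS, h⟩)
      have h2 : ¬ (μ - s < tW z) := fun h => hznot (Or.inr ⟨hzS, h⟩)
      exact hsliceval (μ - s) z hzS (le_antisymm (not_lt.1 h2) (not_lt.1 h1))
  have haeAB' : (A' ∪ B' : Set (ℂ × ℂ)) =ᵐ[volume] S := by
    rw [MeasureTheory.ae_eq_set]
    constructor
    · have : (A' ∪ B') \ S = ∅ := by
        rw [Set.diff_eq_empty]
        exact Set.union_subset Set.inter_subset_left Set.inter_subset_left
      rw [this]
      exact measure_empty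
    · apply measure_mono_null _ (sphere_slice_null (Real.exp ((s - μ)/2)))
      rintro z ⟨hzS, hznot⟩
      have h1 : ¬ (s - μ < tW z) := fun h => hznot (Or.inl ⟨hzS, h⟩)
      have h2 : ¬ (tW z < s - μ) := fun h => hznot (Or.inr ⟨hzS, h⟩)
      exact hsliceval (s - μ) z hzS (le_antisymm (not_lt.1 h1) (not_lt.1 h2))
  -- disjointness
  have hdAB : Disjoint A B := by
    rw [Set.disjoint_left]
    rintro z ⟨_, hz1⟩ ⟨_, hz2⟩
    simp only [Set.mem_setOf_eq] at hz1 hz2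
    exact lt_asymm hz1 hz2
  have hdAB' : Disjoint A' B' := by
    rw [Set.disjoint_left]
    rintro z ⟨_, hz1⟩ ⟨_, hz2⟩
    simp only [Set.mem_setOf_eq] at hz1 hz2
    exact lt_asymm hz2 hz1
  -- integrability on pieces
  have hIA : IntegrableOn f A volume := hint.mono_set Set.inter_subset_left
  have hIB : IntegrableOn f B volume := hint.mono_set Set.inter_subset_left
  have hIA' : IntegrableOn f A' volume := hint.mono_set Set.inter_subset_left
  have hIB' : IntegrableOn f B' volume := hint.mono_set Set.inter_subset_left
  -- splittings
  have hsplit1 : ∫ z in S, f z = (∫ z in A, f z) + ∫ z in B, f z := by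
    rw [← setIntegral_congr_set haeAB, setIntegral_union hdAB hmB hIA hIB]
  have hsplit2 : ∫ z in S, f z = (∫ z in A', f z) + ∫ z in B', f z := by
    rw [← setIntegral_congr_set haeAB', setIntegral_union hdAB' hmB' hIA' hIB']
  -- exponential factors
  have hfac1 : Complex.exp (Complex.I * ((c : ℂ) - (c' : ℂ)) * (s : ℝ)) = -1 := by
    have hcs : (c - c') * s = π := by
      rw [hcc, hs]
      field_simp
    have : Complex.I * ((c : ℂ) - (c' : ℂ)) * ((s : ℝ) : ℂ) = (π : ℂ) * Complex.I := by
      rw [mul_assoc, mul_comm Complex.I, ← Complex.ofReal_sub, ← Complex.ofReal_mul, hcs]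
    rw [this, Complex.exp_pi_mul_I]
  have hfac2 : Complex.exp (Complex.I * ((c : ℂ) - (c' : ℂ)) * ((s - 2*μ : ℝ) : ℂ)) = -1 := by
    have hcs : (c - c') * (s - 2*μ) = π + (-(m : ℤ) : ℝ) * (2 * π) := by
      rw [hcc, hs]
      push_cast
      field_simp
      ring
    have : Complex.I * ((c : ℂ) - (c' : ℂ)) * ((s - 2*μ : ℝ) : ℂ)
        = (π : ℂ) * Complex.I + ((-(m : ℤ) : ℤ) : ℂ) * (2 * (π : ℂ) * Complex.I) := by
      rw [mul_assoc, mul_comm Complex.I, ← Complex.ofReal_sub, ← Complex.ofReal_mul, hcs]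
      push_cast
      ring
    rw [this, Complex.exp_add, Complex.exp_pi_mul_I, Complex.exp_int_mul_two_pi_mul_I, mul_one]
  -- transformed integrals
  have htrans1 : ∫ z in A', f z = - ∫ z in A, f z := by
    rw [← himg1, integral_image_scale _ _ (Complex.exp_ne_zero _)
      (Complex.ofReal_ne_zero.2 (Real.exp_ne_zero _)) A hmA f]
    rw [← integral_neg]
    refine setIntegral_congr_fun hmA (fun z hz => ?_)
    have hz2 : z.2 ≠ 0 := ((hmemS z).1 hz.1).1
    rw [hf]
    simp only
    rw [key_pointwise c c' s j z hz2, hfac1]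
    ring
  have htrans2 : ∫ z in B', f z = - ∫ z in B, f z := by
    rw [← himg2, integral_image_scale _ _ (Complex.exp_ne_zero _)
      (Complex.ofReal_ne_zero.2 (Real.exp_ne_zero _)) B hmB f]
    rw [← integral_neg]
    refine setIntegral_congr_fun hmB (fun z hz => ?_)
    have hz2 : z.2 ≠ 0 := ((hmemS z).1 hz.1).1
    rw [hf]
    simp only
    rw [key_pointwise c c' (s - 2*μ) j z hz2, hfac2]
    ring
  rw [htrans1, htrans2] at hsplit2
  rw [hsplit1]
  linear_combination (hsplit2 - hsplit1) / 2


lemma conj_symm {X : Type*} [MeasurableSpace X] (ν : Measure X) (g h : X → ℂ) :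
    ∫ z, g z * (starRingEnd ℂ) (h z) ∂ν
      = (starRingEnd ℂ) (∫ z, h z * (starRingEnd ℂ) (g z) ∂ν) := by
  rw [← integral_conj]
  apply integral_congr_ae
  filter_upwards with z
  simp only [map_mul, Complex.conj_conj]
  ring

lemma orth_lt (μ c₀ : ℝ) (hμ : 0 < μ) (ℓ ℓ' : ℕ) (j : ℤ) (d : ℕ) (hd : 0 < d)
    (hℓeq : ℓ = ℓ' + 2*d) :
    ∫ z in truncatedWorm μ,
      Hworm c₀ μ ℓ j z * (starRingEnd ℂ) (Hworm c₀ μ ℓ' j z) = 0 := by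
  unfold Hworm
  apply orth_of_ne_k μ hμ _ _ j d hd
  have hcast : (ℓ : ℝ) = (ℓ' : ℝ) + 2*(d : ℝ) := by exact_mod_cast congrArg (Nat.cast (R := ℝ)) hℓeq
  rw [hcast]
  field_simp
  ring

lemma orth_main (μ c₀ : ℝ) (hμ : 0 < μ) (ℓ ℓ' : ℕ) (j j' : ℤ)
    (hpar : ℓ % 2 = ℓ' % 2) (hne : ℓ ≠ ℓ' ∨ j ≠ j') :
    ∫ z in truncatedWorm μ,
      Hworm c₀ μ ℓ j z * (starRingEnd ℂ) (Hworm c₀ μ ℓ' j' z) = 0 := by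
  by_cases hjj : j = j'
  · subst hjj
    have hll : ℓ ≠ ℓ' := hne.resolve_right (fun h => h rfl)
    rcases Nat.lt_or_ge ℓ' ℓ with hlt | hge
    · obtain ⟨d, hd, hℓeq⟩ : ∃ d : ℕ, 0 < d ∧ ℓ = ℓ' + 2*d := ⟨(ℓ - ℓ')/2, by omega, by omega⟩
      exact orth_lt μ c₀ hμ ℓ ℓ' j d hd hℓeq
    · have hlt : ℓ < ℓ' := lt_of_le_of_ne hge hll
      obtain ⟨d, hd, hℓeq⟩ : ∃ d : ℕ, 0 < d ∧ ℓ' = ℓ + 2*d := ⟨(ℓ' - ℓ)/2, by omega, by omega⟩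
      rw [conj_symm, orth_lt μ c₀ hμ ℓ' ℓ j d hd hℓeq, map_zero]
  · unfold Hworm
    exact orth_of_ne_j μ _ _ j j' hjj

/-- Each of the families `{H_{2k,j}}` and `{H_{2k+1,j}}` is an orthogonal system
in `A²(𝒲'_μ)`. -/
theorem Hworm_orthogonal (μ c₀ : ℝ) (hμ : 0 < μ) (hc₀ : -1 < c₀) :
    (∀ (k k' : ℕ) (j j' : ℤ), (k, j) ≠ (k', j') →
      ∫ z in truncatedWorm μ,
        Hworm c₀ μ (2 * k) j z * (starRingEnd ℂ) (Hworm c₀ μ (2 * k') j' z) = 0) ∧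
    (∀ (k k' : ℕ) (j j' : ℤ), (k, j) ≠ (k', j') →
      ∫ z in truncatedWorm μ,
        Hworm c₀ μ (2 * k + 1) j z * (starRingEnd ℂ) (Hworm c₀ μ (2 * k' + 1) j' z) = 0) := by
  constructor
  · intro k k' j j' hne
    apply orth_main μ c₀ hμ _ _ j j' (by omega)
    by_cases hj : j = j'
    · subst hj
      left
      intro hC
      exact hne (by rw [show k = k' from by omega])
    · exact Or.inr hj
  · intro k k' j j' hne
    apply orth_main μ c₀ hμ _ _ j j' (by omega)
    by_cases hj : j = j'
    · subst hj
      left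
      intro hC
      exact hne (by rw [show k = k' from by omega])
    · exact Or.inr hj
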